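/- arXiv:1405.2442 — 2 statements merged into one kernel-verified Lean document; each statement's English description precedes it below -/
import Mathlib

section
/- Assume k(c) > 0 for all c ∈ [0,1]. Then the map c ↦ β*(c) is strictly decreasing on [0,1] and continuously differentiable on [0,1]; moreover the map c ↦ x₀(c) is strictly decreasing on [0,1]. -/
open MeasureTheory Real Set Filter

/-- The (positive multiple of the) strictly decreasing fundamental solution `φ_λ` of the
Ornstein–Uhlenbeck equation `(1/2)σ² f'' + θ(μ - x) f' = λ f`, written as the integral
`φ(x) = ∫₀^∞ t^(λ/θ - 1) exp(-t²/2 - a t (x - μ)) dt` with `a = √(2θ)/σ`. -/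
noncomputable def OUphi (lam th mu sig : ℝ) (x : ℝ) : ℝ :=
  ∫ t in Set.Ioi (0:ℝ),
    t ^ (lam / th - 1) * Real.exp (-t ^ 2 / 2 - Real.sqrt (2 * th) / sig * t * (x - mu))

/-- `k(c) = λ + θ + λ Φ'(c)`. -/
noncomputable def kfun (lam th : ℝ) (Phi : ℝ → ℝ) (c : ℝ) : ℝ :=
  lam + th + lam * deriv Phi c

/-- `G(x; c) = μ(k(c) - θ)/λ + k(c)(x - μ)/(λ + θ)`. -/
noncomputable def Gfun (lam th mu : ℝ) (Phi : ℝ → ℝ) (x c : ℝ) : ℝ :=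
  mu * (kfun lam th Phi c - th) / lam + kfun lam th Phi c * (x - mu) / (lam + th)

/-- `x₀(c) = -θμΦ'(c)/k(c)`. -/
noncomputable def x0fun (lam th mu : ℝ) (Phi : ℝ → ℝ) (c : ℝ) : ℝ :=
  -(th * mu * deriv Phi c) / kfun lam th Phi c

/-- The smooth-fit function `H(x;c) = (k(c)/(λ+θ)) φ(x) - G(x;c) φ'(x)`. -/
noncomputable def Hfun (lam th mu sig : ℝ) (Phi : ℝ → ℝ) (x c : ℝ) : ℝ :=
  kfun lam th Phi c / (lam + th) * OUphi lam th mu sig x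
    - Gfun lam th mu Phi x c * deriv (OUphi lam th mu sig) x


open Metric Topology


noncomputable def Jfun (p a mu : ℝ) (x : ℝ) : ℝ :=
  ∫ t in Set.Ioi (0:ℝ), t ^ p * Real.exp (-t ^ 2 / 2 - a * t * (x - mu))

lemma integ_aux (p b : ℝ) (hp : -1 < p) :
    IntegrableOn (fun t : ℝ => t ^ p * Real.exp (-t ^ 2 / 2 - b * t)) (Ioi 0) := by
  have hG : IntegrableOn (fun t : ℝ => Real.exp ((1 - b) ^ 2 / 2) * (Real.exp (-t) * t ^ (p + 1 - 1))) (Ioi 0) :=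
    (Real.GammaIntegral_convergent (by linarith : (0:ℝ) < p + 1)).const_mul _
  refine Integrable.mono' hG ?_ ?_
  · refine (ContinuousOn.mul ?_ (Continuous.continuousOn (by continuity))).aestronglyMeasurable measurableSet_Ioi
    exact fun t ht => (Real.continuousAt_rpow_const t p (Or.inl (ne_of_gt ht))).continuousWithinAt
  · rw [ae_restrict_iff' measurableSet_Ioi]
    filter_upwards with t ht
    have ht0 : (0:ℝ) < t := ht
    have h1 : (0:ℝ) ≤ t ^ p := Real.rpow_nonneg ht0.le p
    rw [Real.norm_eq_abs, abs_mul, abs_of_nonneg h1, abs_of_nonneg (Real.exp_pos _).le]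
    have key : -t ^ 2 / 2 - b * t ≤ (1 - b) ^ 2 / 2 + -t := by nlinarith [sq_nonneg (t - (1 - b))]
    calc t ^ p * Real.exp (-t ^ 2 / 2 - b * t)
        ≤ t ^ p * Real.exp ((1 - b) ^ 2 / 2 + -t) := by
          exact mul_le_mul_of_nonneg_left (Real.exp_le_exp.2 key) h1
      _ = Real.exp ((1 - b) ^ 2 / 2) * (Real.exp (-t) * t ^ (p + 1 - 1)) := by
          rw [Real.exp_add]; ring_nf

lemma Jfun_integrableOn (p a mu x : ℝ) (hp : -1 < p) :
    IntegrableOn (fun t : ℝ => t ^ p * Real.exp (-t ^ 2 / 2 - a * t * (x - mu))) (Ioi 0) := by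
  have := integ_aux p (a * (x - mu)) hp
  simpa [mul_comm, mul_assoc, mul_left_comm] using this

lemma Jfun_pos (p a mu x : ℝ) (hp : -1 < p) : 0 < Jfun p a mu x := by
  rw [Jfun]
  rw [setIntegral_pos_iff_support_of_nonneg_ae]
  · have : (Function.support fun t : ℝ => t ^ p * Real.exp (-t ^ 2 / 2 - a * t * (x - mu))) ∩ Ioi 0 = Ioi 0 := by
      ext t
      simp only [Function.mem_support, mem_inter_iff, mem_Ioi, and_iff_right_iff_imp]
      intro ht
      positivity
    rw [this]
    simp
  · rw [EventuallyLE, ae_restrict_iff' measurableSet_Ioi]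
    filter_upwards with t ht
    have : (0:ℝ) < t := ht
    positivity
  · exact Jfun_integrableOn p a mu x hp


lemma Jfun_hasDerivAt (p a mu : ℝ) (hp : -1 < p) (ha : 0 < a) (x₀ : ℝ) :
    HasDerivAt (Jfun p a mu) (-(a * Jfun (p + 1) a mu x₀)) x₀ := by
  set F : ℝ → ℝ → ℝ := fun x t => t ^ p * Real.exp (-t ^ 2 / 2 - a * t * (x - mu)) with hF
  set F' : ℝ → ℝ → ℝ := fun x t => t ^ p * Real.exp (-t ^ 2 / 2 - a * t * (x - mu)) * (-(a * t)) with hF'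
  set bound : ℝ → ℝ := fun t => a * (t ^ (p + 1) * Real.exp (-t ^ 2 / 2 - (a * (x₀ - mu) - a) * t)) with hbd
  have key := hasDerivAt_integral_of_dominated_loc_of_deriv_le (F := F) (F' := F')
    (μ := volume.restrict (Ioi 0)) (x₀ := x₀) (bound := bound) (Metric.ball_mem_nhds x₀ one_pos)
    ?_ ?_ ?_ ?_ ?_ ?_
  · have h2 : (∫ t in Ioi (0:ℝ), F' x₀ t) = -(a * Jfun (p + 1) a mu x₀) := by
      rw [Jfun, ← integral_const_mul, ← integral_neg]
      refine setIntegral_congr_fun measurableSet_Ioi (fun t ht => ?_)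
      have ht0 : (0:ℝ) < t := ht
      simp only [hF']
      rw [Real.rpow_add_one (ne_of_gt ht0)]
      ring
    rw [← h2]
    exact key.2
  · filter_upwards with x
    exact (Jfun_integrableOn p a mu x hp).aestronglyMeasurable
  · exact Jfun_integrableOn p a mu x₀ hp
  · have : IntegrableOn (fun t : ℝ => F' x₀ t) (Ioi 0) := by
      have h := (Jfun_integrableOn (p+1) a mu x₀ (by linarith)).const_mul (-a)
      refine IntegrableOn.congr_fun h (fun t ht => ?_) measurableSet_Ioi
      have ht0 : (0:ℝ) < t := ht
      simp only [hF']
      rw [Real.rpow_add_one (ne_of_gt ht0)]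
      ring
    exact this.aestronglyMeasurable
  · rw [ae_restrict_iff' measurableSet_Ioi]
    filter_upwards with t ht
    intro x hx
    have ht0 : (0:ℝ) < t := ht
    have hxd : |x - x₀| < 1 := by simpa [Real.dist_eq] using hx
    have harg : -t ^ 2 / 2 - a * t * (x - mu) ≤ -t ^ 2 / 2 - (a * (x₀ - mu) - a) * t := by
      have : -(a * t * (x - mu)) ≤ -(a * t * (x₀ - mu)) + a * t := by
        nlinarith [abs_le.1 hxd.le, mul_pos ha ht0]
      linarith
    have h1 : (0:ℝ) ≤ t ^ p := Real.rpow_nonneg ht0.le p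
    simp only [hF', hbd, Real.norm_eq_abs, abs_mul, abs_of_nonneg h1,
      abs_of_nonneg (Real.exp_pos _).le, abs_neg, abs_of_pos ha]
    rw [abs_of_pos ht0, Real.rpow_add_one (ne_of_gt ht0)]
    calc t ^ p * Real.exp (-t ^ 2 / 2 - a * t * (x - mu)) * (a * t)
        ≤ t ^ p * Real.exp (-t ^ 2 / 2 - (a * (x₀ - mu) - a) * t) * (a * t) := by
          have := Real.exp_le_exp.2 harg
          exact mul_le_mul_of_nonneg_right (mul_le_mul_of_nonneg_left this h1)
            (by positivity)
      _ = a * (t ^ p * t * Real.exp (-t ^ 2 / 2 - (a * (x₀ - mu) - a) * t)) := by ring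
  · have : Integrable (fun t : ℝ => a * (t ^ (p+1) * Real.exp (-t ^ 2 / 2 - (a * (x₀ - mu) - a) * t))) (volume.restrict (Ioi 0)) :=
      (integ_aux (p+1) (a * (x₀ - mu) - a) (by linarith)).const_mul a
    exact this
  · rw [ae_restrict_iff' measurableSet_Ioi]
    filter_upwards with t ht
    intro x hx
    have : HasDerivAt (fun x : ℝ => -t ^ 2 / 2 - a * t * (x - mu)) (-(a * t)) x := by
      have h1 : HasDerivAt (fun x : ℝ => x - mu) 1 x := (hasDerivAt_id x).sub_const mu
      have h2 := (h1.const_mul (a * t)).const_sub (-t ^ 2 / 2)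
      simpa using h2
    show HasDerivAt (fun x => t ^ p * Real.exp (-t ^ 2 / 2 - a * t * (x - mu))) (F' x t) x
    have h3 := this.exp.const_mul (t ^ p)
    refine h3.congr_deriv ?_
    show _ = t ^ p * Real.exp (-t ^ 2 / 2 - a * t * (x - mu)) * (-(a * t))
    ring



set_option maxHeartbeats 2000000 in
/-- assume `k > 0` on `[0,1]` and let `β : ℝ → ℝ` pick, for every
`c ∈ [0,1]`, the unique real zero `β(c) < x₀(c)` of `H(·;c)`. Then `β` is strictly
decreasing on `[0,1]` and continuously differentiable on `[0,1]`; moreover `x₀` is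
strictly decreasing on `[0,1]`. -/
theorem statement6 (lam th mu sig : ℝ)
    (hlam : 0 < lam) (hth : 0 < th) (hmu : 0 < mu) (hsig : 0 < sig)
    (Phi : ℝ → ℝ) (hPhiC2 : ContDiff ℝ 2 Phi)
    (hPhiconv : StrictConvexOn ℝ Set.univ Phi)
    (hPhi' : ∀ c ∈ Set.Icc (0:ℝ) 1, deriv Phi c < 0) (hPhi1 : Phi 1 = 0)
    (hk : ∀ c ∈ Set.Icc (0:ℝ) 1, 0 < kfun lam th Phi c)
    (beta : ℝ → ℝ)
    (hbeta : ∀ c ∈ Set.Icc (0:ℝ) 1, Hfun lam th mu sig Phi (beta c) c = 0 ∧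
      beta c < x0fun lam th mu Phi c ∧
      ∀ y : ℝ, Hfun lam th mu sig Phi y c = 0 → y = beta c) :
    StrictAntiOn beta (Set.Icc (0:ℝ) 1) ∧
    ContDiffOn ℝ 1 beta (Set.Icc (0:ℝ) 1) ∧
    StrictAntiOn (x0fun lam th mu Phi) (Set.Icc (0:ℝ) 1) := by
  have hlt : (0:ℝ) < lam + th := by linarith
  have hlam' : lam ≠ 0 := ne_of_gt hlam
  have hlt' : lam + th ≠ 0 := ne_of_gt hlt
  set a : ℝ := Real.sqrt (2 * th) / sig with ha_def
  have ha : 0 < a := div_pos (Real.sqrt_pos.2 (by linarith)) hsig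
  set ν : ℝ := lam / th - 1 with hν_def
  have hν : -1 < ν := by
    have := div_pos hlam hth; simp only [hν_def]; linarith
  set J0 : ℝ → ℝ := Jfun ν a mu with hJ0_def
  set J1 : ℝ → ℝ := Jfun (ν + 1) a mu with hJ1_def
  set J2 : ℝ → ℝ := Jfun (ν + 1 + 1) a mu with hJ2_def
  have hν1 : (-1:ℝ) < ν + 1 := by linarith
  have hν2 : (-1:ℝ) < ν + 1 + 1 := by linarith
  have J0pos : ∀ x, 0 < J0 x := fun x => Jfun_pos _ _ _ _ hν
  have J1pos : ∀ x, 0 < J1 x := fun x => Jfun_pos _ _ _ _ hν1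
  have J2pos : ∀ x, 0 < J2 x := fun x => Jfun_pos _ _ _ _ hν2
  have hJ0d : ∀ x, HasDerivAt J0 (-(a * J1 x)) x := fun x => Jfun_hasDerivAt _ _ _ hν ha x
  have hJ1d : ∀ x, HasDerivAt J1 (-(a * J2 x)) x := fun x => Jfun_hasDerivAt _ _ _ hν1 ha x
  have hJ2d : ∀ x, HasDerivAt J2 (-(a * Jfun (ν+1+1+1) a mu x)) x :=
    fun x => Jfun_hasDerivAt _ _ _ hν2 ha x
  have J1cont : Continuous J1 :=
    continuous_iff_continuousAt.2 fun x => (hJ1d x).differentiableAt.continuousAt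
  have J2cont : Continuous J2 :=
    continuous_iff_continuousAt.2 fun x => (hJ2d x).differentiableAt.continuousAt
  have J3cont : Continuous (Jfun (ν+1+1+1) a mu) :=
    continuous_iff_continuousAt.2 fun x =>
      (Jfun_hasDerivAt _ _ _ (by linarith : (-1:ℝ) < ν+1+1+1) ha x).differentiableAt.continuousAt
  have hJ0C : ContDiff ℝ 1 J0 := by
    rw [contDiff_one_iff_deriv]
    refine ⟨fun x => (hJ0d x).differentiableAt, ?_⟩
    rw [show deriv J0 = fun x => -(a * J1 x) from funext fun x => (hJ0d x).deriv]
    exact (continuous_const.mul J1cont).neg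
  have hJ1C : ContDiff ℝ 1 J1 := by
    rw [contDiff_one_iff_deriv]
    refine ⟨fun x => (hJ1d x).differentiableAt, ?_⟩
    rw [show deriv J1 = fun x => -(a * J2 x) from funext fun x => (hJ1d x).deriv]
    exact (continuous_const.mul J2cont).neg
  set cB : ℝ := a * mu * th / lam with hcB_def
  have hcB : 0 < cB := by positivity
  set A : ℝ → ℝ := fun x => J0 x / (lam + th) + a * (mu / lam + (x - mu) / (lam + th)) * J1 x
    with hA_def
  have hAC : ContDiff ℝ 1 A := by
    refine (hJ0C.div_const _).add ((contDiff_const.mul ?_).mul hJ1C)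
    exact contDiff_const.add ((contDiff_id.sub contDiff_const).div_const _)
  have contA : Continuous A := hAC.continuous
  -- basic facts about OUphi
  have hOU : OUphi lam th mu sig = J0 := rfl
  have hOUd : deriv (OUphi lam th mu sig) = fun x => -(a * J1 x) := by
    rw [hOU]; exact funext fun x => (hJ0d x).deriv
  -- representation of Hfun
  have Hrepr : ∀ x c, Hfun lam th mu sig Phi x c = kfun lam th Phi c * A x - cB * J1 x := by
    intro x c
    unfold Hfun Gfun
    rw [hOUd]
    simp only [hOU, hA_def, hcB_def]
    field_simp
    ring
  -- Gfun in terms of x0fun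
  have Gfun_eq : ∀ x c, kfun lam th Phi c ≠ 0 →
      Gfun lam th mu Phi x c =
        kfun lam th Phi c * (x - x0fun lam th mu Phi c) / (lam + th) := by
    intro x c hkc
    unfold Gfun x0fun kfun at *
    field_simp
    ring
  -- H is positive at or beyond x0
  have Hpos : ∀ c ∈ Set.Icc (0:ℝ) 1, ∀ x, x0fun lam th mu Phi c ≤ x →
      0 < Hfun lam th mu sig Phi x c := by
    intro c hc x hx
    have hkc := hk c hc
    unfold Hfun
    rw [hOUd]
    simp only [hOU]
    rw [Gfun_eq x c (ne_of_gt hkc)]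
    have h1 : 0 < kfun lam th Phi c / (lam + th) * J0 x :=
      mul_pos (div_pos hkc hlt) (J0pos x)
    have h2 : 0 ≤ kfun lam th Phi c * (x - x0fun lam th mu Phi c) / (lam + th) * (a * J1 x) :=
      mul_nonneg (div_nonneg (mul_nonneg hkc.le (by linarith)) hlt.le)
        (mul_pos ha (J1pos x)).le
    have heq : kfun lam th Phi c / (lam + th) * J0 x -
        kfun lam th Phi c * (x - x0fun lam th mu Phi c) / (lam + th) * -(a * J1 x) =
        kfun lam th Phi c / (lam + th) * J0 x +
        kfun lam th Phi c * (x - x0fun lam th mu Phi c) / (lam + th) * (a * J1 x) := by ring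
    rw [heq]
    linarith
  -- deriv Phi is strictly monotone
  have hPhidiff : ∀ x ∈ (Set.univ : Set ℝ), DifferentiableAt ℝ Phi x :=
    fun x _ => (hPhiC2.differentiable (by norm_num)).differentiableAt
  have hmono : StrictMonoOn (deriv Phi) (Set.univ : Set ℝ) :=
    hPhiconv.strictMonoOn_deriv hPhidiff
  -- key fact at beta c
  have key : ∀ c ∈ Set.Icc (0:ℝ) 1,
      0 < A (beta c) ∧ kfun lam th Phi c * A (beta c) = cB * J1 (beta c) := by
    intro c hc
    have h0 := (hbeta c hc).1
    rw [Hrepr] at h0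
    have heq : kfun lam th Phi c * A (beta c) = cB * J1 (beta c) := by linarith
    have hApos : 0 < A (beta c) := by
      have h1 : 0 < cB * J1 (beta c) := mul_pos hcB (J1pos _)
      nlinarith [hk c hc]
    exact ⟨hApos, heq⟩
  -- kfun monotone
  have hkmono : ∀ c₁ ∈ Set.Icc (0:ℝ) 1, ∀ c₂ ∈ Set.Icc (0:ℝ) 1, c₁ < c₂ →
      kfun lam th Phi c₁ < kfun lam th Phi c₂ := by
    intro c₁ _ c₂ _ h
    have := hmono (mem_univ c₁) (mem_univ c₂) h
    unfold kfun
    nlinarith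
  -- strict antitonicity of beta
  have hanti : StrictAntiOn beta (Set.Icc (0:ℝ) 1) := by
    intro c₁ hc₁ c₂ hc₂ hlt12
    obtain ⟨hA2, heq2⟩ := key c₂ hc₂
    have hk12 := hkmono c₁ hc₁ c₂ hc₂ hlt12
    set y := beta c₂ with hy
    have hneg : Hfun lam th mu sig Phi y c₁ < 0 := by
      rw [Hrepr]
      nlinarith [mul_lt_mul_of_pos_right hk12 hA2]
    set T : ℝ := max y (x0fun lam th mu Phi c₁) + 1 with hT
    have hyT : y < T := by
      have := le_max_left y (x0fun lam th mu Phi c₁); simp only [hT]; linarith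
    have hx0T : x0fun lam th mu Phi c₁ ≤ T := by
      have := le_max_right y (x0fun lam th mu Phi c₁); simp only [hT]; linarith
    have hHT : 0 < Hfun lam th mu sig Phi T c₁ := Hpos c₁ hc₁ T hx0T
    have contH : ContinuousOn (fun x => Hfun lam th mu sig Phi x c₁) (Icc y T) := by
      have hfe : (fun x => Hfun lam th mu sig Phi x c₁) =
          fun x => kfun lam th Phi c₁ * A x - cB * J1 x := funext fun x => Hrepr x c₁
      rw [hfe]
      exact ((continuous_const.mul contA).sub (continuous_const.mul J1cont)).continuousOn
    have hmem : (0:ℝ) ∈ Ioo (Hfun lam th mu sig Phi y c₁) (Hfun lam th mu sig Phi T c₁) :=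
      ⟨hneg, hHT⟩
    obtain ⟨z, hz, hz0⟩ := intermediate_value_Ioo hyT.le contH hmem
    have := (hbeta c₁ hc₁).2.2 z hz0
    rw [← this]
    exact hz.1
  refine ⟨hanti, ?_, ?_⟩
  · -- C¹ smoothness of beta
    intro c hc
    have hkc := hk c hc
    obtain ⟨hAxc, heqc⟩ := key c hc
    set xc := beta c with hxc_def
    -- derivative of A
    have hAd : ∀ x, HasDerivAt A
        (-(a * J1 x) / (lam + th) + (a * (1 / (lam + th)) * J1 x +
          a * (mu / lam + (x - mu) / (lam + th)) * -(a * J2 x))) x := by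
      intro x
      have h1 : HasDerivAt (fun x => J0 x / (lam + th)) (-(a * J1 x) / (lam + th)) x :=
        (hJ0d x).div_const _
      have h2' : HasDerivAt (fun x : ℝ => mu / lam + (x - mu) / (lam + th)) (1 / (lam + th)) x := by
        have := (((hasDerivAt_id x).sub_const mu).div_const (lam + th)).const_add (mu / lam)
        simpa using this
      have h2 : HasDerivAt (fun x : ℝ => a * (mu / lam + (x - mu) / (lam + th)))
          (a * (1 / (lam + th))) x := h2'.const_mul a
      exact h1.add (h2.mul (hJ1d x))
    -- Q and its derivative at xc
    set Q : ℝ → ℝ := fun x => cB * J1 x / A x with hQ_def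
    have hAne : A xc ≠ 0 := ne_of_gt hAxc
    have hq : HasDerivAt Q
        ((cB * -(a * J2 xc) * A xc - cB * J1 xc *
          (-(a * J1 xc) / (lam + th) + (a * (1 / (lam + th)) * J1 xc +
            a * (mu / lam + (xc - mu) / (lam + th)) * -(a * J2 xc)))) / A xc ^ 2) xc :=
      ((hJ1d xc).const_mul cB).div (hAd xc) hAne
    -- G is negative at (xc, c)
    have hGneg : Gfun lam th mu Phi xc c < 0 := by
      have h0 := (hbeta c hc).1
      unfold Hfun at h0
      rw [hOUd] at h0
      simp only [hOU] at h0
      by_contra hcon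
      push_neg at hcon
      nlinarith [mul_pos (div_pos hkc hlt) (J0pos xc), mul_pos ha (J1pos xc),
        mul_nonneg hcon (mul_pos ha (J1pos xc)).le]
    have hq'ne : (cB * -(a * J2 xc) * A xc - cB * J1 xc *
          (-(a * J1 xc) / (lam + th) + (a * (1 / (lam + th)) * J1 xc +
            a * (mu / lam + (xc - mu) / (lam + th)) * -(a * J2 xc)))) / A xc ^ 2 ≠ 0 := by
      have hNval : cB * -(a * J2 xc) * A xc - cB * J1 xc *
          (-(a * J1 xc) / (lam + th) + (a * (1 / (lam + th)) * J1 xc +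
            a * (mu / lam + (xc - mu) / (lam + th)) * -(a * J2 xc))) =
          a ^ 2 * J2 xc * A xc * Gfun lam th mu Phi xc c := by
        have hBx : cB * J1 xc = kfun lam th Phi c * A xc := heqc.symm
        rw [hBx]
        unfold Gfun
        simp only [hcB_def]
        field_simp
        ring
      rw [hNval]
      have hNneg : a ^ 2 * J2 xc * A xc * Gfun lam th mu Phi xc c < 0 :=
        mul_neg_of_pos_of_neg (mul_pos (mul_pos (by positivity : (0:ℝ) < a ^ 2) (J2pos xc)) hAxc) hGneg
      exact div_ne_zero (ne_of_lt hNneg) (pow_ne_zero 2 hAne)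
    -- Q is C¹ at xc
    have hQca : ContDiffAt ℝ 1 Q xc :=
      ((contDiff_const.mul hJ1C).contDiffAt).div hAC.contDiffAt hAne
    have hfd := hq.hasFDerivAt_equiv hq'ne
    have hone : (1 : WithTop ℕ∞) ≠ 0 := one_ne_zero
    set g : ℝ → ℝ := hQca.localInverse hfd hone with hg_def
    have hgC : ContDiffAt ℝ 1 g (Q xc) := hQca.to_localInverse hfd hone
    have hgx : g (Q xc) = xc := hQca.localInverse_apply_image hfd hone
    have hrinv : ∀ᶠ y in 𝓝 (Q xc), Q (g y) = y :=
      (hQca.hasStrictFDerivAt' hfd hone).eventually_right_inverse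
    -- Q xc = kfun c
    have hQxc : Q xc = kfun lam th Phi c := by
      simp only [hQ_def]
      rw [← heqc]
      field_simp
    -- kfun is C¹
    have hdPhiC : ContDiff ℝ 1 (deriv Phi) := by
      have h2 : ContDiff ℝ (1 + 1 : ℕ) Phi := by exact_mod_cast hPhiC2
      exact (contDiff_succ_iff_deriv.mp h2).2.2
    have hkC : ContDiff ℝ 1 (kfun lam th Phi) := by
      unfold kfun
      exact contDiff_const.add (contDiff_const.mul hdPhiC)
    have hk_cont : ContinuousAt (kfun lam th Phi) c := hkC.continuous.continuousAt
    rw [hQxc] at hgC hrinv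
    have hgkc : g (kfun lam th Phi c) = xc := by rw [← hQxc]; exact hgx
    -- composition is C¹ at c
    have hgk : ContDiffAt ℝ 1 (fun c' => g (kfun lam th Phi c')) c :=
      hgC.comp c hkC.contDiffAt
    -- eventual equality with beta
    have h1 : ∀ᶠ c' in 𝓝 c, Q (g (kfun lam th Phi c')) = kfun lam th Phi c' :=
      hk_cont.eventually hrinv
    have hgcont : ContinuousAt (fun c' => A (g (kfun lam th Phi c'))) c := by
      have h := contA.continuousAt.comp ((hgC.continuousAt).comp hk_cont)
      exact h
    have h2 : ∀ᶠ c' in 𝓝 c, 0 < A (g (kfun lam th Phi c')) := by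
      have hval : 0 < A (g (kfun lam th Phi c)) := by rw [hgkc]; exact hAxc
      exact hgcont.eventually (eventually_gt_nhds hval)
    have hev : beta =ᶠ[𝓝[Set.Icc (0:ℝ) 1] c] fun c' => g (kfun lam th Phi c') := by
      filter_upwards [h1.filter_mono nhdsWithin_le_nhds, h2.filter_mono nhdsWithin_le_nhds,
        self_mem_nhdsWithin] with c' he1 he2 hc'
      have hAne' : A (g (kfun lam th Phi c')) ≠ 0 := ne_of_gt he2
      have heqq : kfun lam th Phi c' * A (g (kfun lam th Phi c')) =
          cB * J1 (g (kfun lam th Phi c')) := by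
        simp only [hQ_def] at he1
        field_simp at he1
        linarith
      have hH0 : Hfun lam th mu sig Phi (g (kfun lam th Phi c')) c' = 0 := by
        rw [Hrepr]; linarith
      exact ((hbeta c' hc').2.2 _ hH0).symm
    exact (hgk.contDiffWithinAt).congr_of_eventuallyEq hev (by rw [hgkc])
  · -- x0 strictly antitone
    intro c₁ hc₁ c₂ hc₂ hlt12
    have hd12 := hmono (mem_univ c₁) (mem_univ c₂) hlt12
    have hd2 := hPhi' c₂ hc₂
    have hk1 := hk c₁ hc₁
    have hk2 := hk c₂ hc₂
    have hk12 := hkmono c₁ hc₁ c₂ hc₂ hlt12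
    unfold x0fun
    rw [div_lt_div_iff₀ hk2 hk1]
    have hp2 : deriv Phi c₂ < 0 := hd2
    have s1 : -deriv Phi c₂ * kfun lam th Phi c₁ < -deriv Phi c₁ * kfun lam th Phi c₁ :=
      mul_lt_mul_of_pos_right (by linarith) hk1
    have s2 : -deriv Phi c₁ * kfun lam th Phi c₁ < -deriv Phi c₁ * kfun lam th Phi c₂ :=
      mul_lt_mul_of_pos_left hk12 (by linarith)
    nlinarith [mul_lt_mul_of_pos_left (lt_trans s1 s2) (mul_pos hth hmu)]
end

section
/- Fix c ∈ [0,1] with k(c) > 0, and let β*(c) be the unique real zero of H(·; c). Then β*(c) < θμ/k(c). -/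
open MeasureTheory Real Set Filter

noncomputable def Jint (v b : ℝ) : ℝ :=
  ∫ t in Set.Ioi (0:ℝ), t ^ (v - 1) * Real.exp (-t ^ 2 / 2 - b * t)

lemma integrable_Jint (v b : ℝ) (hv : 0 < v) :
    IntegrableOn (fun t : ℝ => t ^ (v - 1) * Real.exp (-t ^ 2 / 2 - b * t)) (Ioi 0) := by
  have hmeas : AEStronglyMeasurable
      (fun t : ℝ => t ^ (v - 1) * Real.exp (-t ^ 2 / 2 - b * t))
      (volume.restrict (Ioi 0)) := by
    apply Measurable.aestronglyMeasurable
    fun_prop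
  have hg : IntegrableOn
      (fun t : ℝ => Real.exp ((1 - b) ^ 2 / 2) * (Real.exp (-t) * t ^ (v - 1))) (Ioi 0) :=
    (Real.GammaIntegral_convergent hv).const_mul _
  refine hg.mono' hmeas ?_
  rw [ae_restrict_iff' measurableSet_Ioi]
  filter_upwards with t ht
  have ht0 : 0 < t := ht
  have h1 : 0 ≤ t ^ (v - 1) := Real.rpow_nonneg ht0.le _
  rw [Real.norm_eq_abs, abs_of_nonneg (mul_nonneg h1 (Real.exp_pos _).le)]
  have h2 : Real.exp (-t ^ 2 / 2 - b * t) ≤ Real.exp ((1 - b) ^ 2 / 2) * Real.exp (-t) := by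
    rw [← Real.exp_add, Real.exp_le_exp]
    nlinarith [sq_nonneg (t - (1 - b))]
  calc t ^ (v - 1) * Real.exp (-t ^ 2 / 2 - b * t)
      ≤ t ^ (v - 1) * (Real.exp ((1 - b) ^ 2 / 2) * Real.exp (-t)) :=
        mul_le_mul_of_nonneg_left h2 h1
    _ = Real.exp ((1 - b) ^ 2 / 2) * (Real.exp (-t) * t ^ (v - 1)) := by ring

lemma Jint_pos (v b : ℝ) (hv : 0 < v) : 0 < Jint v b := by
  rw [Jint, setIntegral_pos_iff_support_of_nonneg_ae]
  · refine lt_of_lt_of_le (show (0:ENNReal) < volume (Ioi (0:ℝ)) by simp [Real.volume_Ioi])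
      (measure_mono ?_)
    intro t ht
    refine ⟨?_, ht⟩
    have ht0 : (0:ℝ) < t := ht
    exact (mul_pos (Real.rpow_pos_of_pos ht0 _) (Real.exp_pos _)).ne'
  · rw [EventuallyLE, ae_restrict_iff' measurableSet_Ioi]
    filter_upwards with t ht
    exact mul_nonneg (Real.rpow_nonneg (le_of_lt ht) _) (Real.exp_pos _).le
  · exact integrable_Jint v b hv

lemma Jint_identity (v b : ℝ) (hv : 0 < v) :
    Jint (v + 2) b + b * Jint (v + 1) b = v * Jint v b := by
  set F : ℝ → ℝ := fun t => t ^ v * Real.exp (-t ^ 2 / 2 - b * t) with hF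
  set F' : ℝ → ℝ := fun t =>
    v * (t ^ (v - 1) * Real.exp (-t ^ 2 / 2 - b * t))
      - t ^ (v + 2 - 1) * Real.exp (-t ^ 2 / 2 - b * t)
      - b * (t ^ (v + 1 - 1) * Real.exp (-t ^ 2 / 2 - b * t)) with hF'
  have hderiv : ∀ t ∈ Ioi (0:ℝ), HasDerivAt F (F' t) t := by
    intro t ht
    have ht0 : (0:ℝ) < t := ht
    have h1 : HasDerivAt (fun t : ℝ => t ^ v) (v * t ^ (v - 1)) t :=
      Real.hasDerivAt_rpow_const (Or.inl ht0.ne')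
    have h2 : HasDerivAt (fun t : ℝ => -t ^ 2 / 2 - b * t) (-t - b) t := by
      have := ((hasDerivAt_pow 2 t).neg.div_const 2).sub ((hasDerivAt_id t).const_mul b)
      refine this.congr_deriv ?_
      norm_num; ring
    have h3 := h1.mul h2.exp
    refine h3.congr_deriv ?_
    simp only [hF']
    have e1 : t ^ (v + 2 - 1) = t ^ (v - 1) * t ^ (2:ℕ) := by
      rw [show v + 2 - 1 = v - 1 + 2 by ring, Real.rpow_add ht0,
        show ((2:ℝ)) = ((2:ℕ):ℝ) by norm_num, Real.rpow_natCast]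
    have e2 : t ^ (v + 1 - 1) = t ^ (v - 1) * t := by
      rw [show v + 1 - 1 = (v - 1) + 1 by ring, Real.rpow_add_one ht0.ne']
    rw [e1, e2, show t ^ v = t ^ (v-1) * t from by
      conv_lhs => rw [show v = v - 1 + 1 by ring]
      rw [Real.rpow_add_one ht0.ne']]
    ring
  have hcont : ContinuousWithinAt F (Ici 0) 0 := by
    apply ContinuousWithinAt.mul
    · exact (Real.continuousAt_rpow_const 0 v (Or.inr hv.le)).continuousWithinAt
    · exact (Real.continuous_exp.comp (by continuity)).continuousWithinAt
  have hFint : IntegrableOn F' (Ioi 0) := by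
    exact (((integrable_Jint v b hv).const_mul v).sub
      (integrable_Jint (v+2) b (by linarith))).sub
      ((integrable_Jint (v+1) b (by linarith)).const_mul b)
  have htop : Tendsto F atTop (nhds 0) := by
    have hub : ∀ᶠ t in atTop, F t ≤ Real.exp ((1 - b) ^ 2 / 2) * (t ^ v * Real.exp (-1 * t)) := by
      filter_upwards [eventually_gt_atTop 0] with t ht
      have h1 : 0 ≤ t ^ v := Real.rpow_nonneg ht.le _
      have h2 : Real.exp (-t ^ 2 / 2 - b * t) ≤ Real.exp ((1 - b) ^ 2 / 2) * Real.exp (-1 * t) := by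
        rw [← Real.exp_add, Real.exp_le_exp]
        nlinarith [sq_nonneg (t - (1 - b))]
      calc F t ≤ t ^ v * (Real.exp ((1 - b) ^ 2 / 2) * Real.exp (-1 * t)) :=
            mul_le_mul_of_nonneg_left h2 h1
        _ = Real.exp ((1 - b) ^ 2 / 2) * (t ^ v * Real.exp (-1 * t)) := by ring
    have hlb : ∀ᶠ t in atTop, 0 ≤ F t := by
      filter_upwards [eventually_gt_atTop 0] with t ht
      exact mul_nonneg (Real.rpow_nonneg ht.le _) (Real.exp_pos _).le
    have hg : Tendsto (fun t : ℝ => Real.exp ((1 - b) ^ 2 / 2) * (t ^ v * Real.exp (-1 * t)))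
        atTop (nhds 0) := by
      have := (tendsto_rpow_mul_exp_neg_mul_atTop_nhds_zero v 1 one_pos).const_mul
        (Real.exp ((1 - b) ^ 2 / 2))
      simpa using this
    exact squeeze_zero' hlb hub hg
  have key := integral_Ioi_of_hasDerivAt_of_tendsto hcont hderiv hFint htop
  have hF0 : F 0 = 0 := by
    simp [hF, Real.zero_rpow hv.ne']
  rw [hF0, sub_zero] at key
  have i0 := integrable_Jint v b hv
  have i2 := integrable_Jint (v+2) b (by linarith)
  have i1 := integrable_Jint (v+1) b (by linarith)
  have iA : IntegrableOn (fun t : ℝ =>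
      v * (t ^ (v - 1) * Real.exp (-t ^ 2 / 2 - b * t))
        - t ^ (v + 2 - 1) * Real.exp (-t ^ 2 / 2 - b * t)) (Ioi 0) := (i0.const_mul v).sub i2
  have hsplit : ∫ t in Ioi (0:ℝ), F' t
      = v * Jint v b - Jint (v+2) b - b * Jint (v+1) b := by
    simp only [hF']
    rw [integral_sub iA (i1.const_mul b),
      integral_sub (i0.const_mul v) i2,
      integral_const_mul, integral_const_mul]
    rfl
  rw [hsplit] at key
  linarith

lemma OUphi_eq (lam th mu sig x : ℝ) :
    OUphi lam th mu sig x = Jint (lam / th) (Real.sqrt (2 * th) / sig * (x - mu)) := by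
  rw [OUphi, Jint]
  congr 1
  funext t
  rw [show -t ^ 2 / 2 - Real.sqrt (2 * th) / sig * t * (x - mu)
      = -t ^ 2 / 2 - Real.sqrt (2 * th) / sig * (x - mu) * t from by ring]

lemma hasDerivAt_OUphi (lam th mu sig : ℝ) (hlam : 0 < lam) (hth : 0 < th) (hsig : 0 < sig)
    (x : ℝ) :
    HasDerivAt (OUphi lam th mu sig)
      (-(Real.sqrt (2 * th) / sig
        * Jint (lam / th + 1) (Real.sqrt (2 * th) / sig * (x - mu)))) x := by
  set a : ℝ := Real.sqrt (2 * th) / sig with ha_def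
  set v : ℝ := lam / th with hv_def
  have ha : 0 < a := div_pos (Real.sqrt_pos.2 (by linarith)) hsig
  have hv : 0 < v := div_pos hlam hth
  set F : ℝ → ℝ → ℝ := fun x' t => t ^ (v - 1) * Real.exp (-t ^ 2 / 2 - a * t * (x' - mu))
    with hF_def
  set F' : ℝ → ℝ → ℝ :=
    fun x' t => t ^ (v - 1) * Real.exp (-t ^ 2 / 2 - a * t * (x' - mu)) * (-(a * t))
    with hF'_def
  set bound : ℝ → ℝ := fun t =>
    a * (t ^ (v + 1 - 1) * Real.exp (-t ^ 2 / 2 - a * (x - 1 - mu) * t)) with hbound_def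
  have hF_meas : ∀ᶠ x' in nhds x, AEStronglyMeasurable (F x') (volume.restrict (Ioi 0)) := by
    filter_upwards with x'
    apply Measurable.aestronglyMeasurable
    fun_prop
  have hF_int : Integrable (F x) (volume.restrict (Ioi 0)) := by
    have h := integrable_Jint v (a * (x - mu)) hv
    have heq : (fun t : ℝ => t ^ (v - 1) * Real.exp (-t ^ 2 / 2 - a * (x - mu) * t)) = F x := by
      funext t
      simp only [hF_def]
      rw [show -t ^ 2 / 2 - a * (x - mu) * t = -t ^ 2 / 2 - a * t * (x - mu) from by ring]
    rwa [heq] at h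
  have hF'_meas : AEStronglyMeasurable (F' x) (volume.restrict (Ioi 0)) := by
    apply Measurable.aestronglyMeasurable
    fun_prop
  have h_bound : ∀ᵐ t ∂(volume.restrict (Ioi 0)),
      ∀ x' ∈ Metric.ball x 1, ‖F' x' t‖ ≤ bound t := by
    rw [ae_restrict_iff' measurableSet_Ioi]
    filter_upwards with t ht x' hx'
    have ht0 : (0:ℝ) < t := ht
    have hx'1 : |x' - x| < 1 := by rwa [Metric.mem_ball, Real.dist_eq] at hx'
    have hxx := abs_lt.mp hx'1
    have h1 : 0 ≤ t ^ (v - 1) := Real.rpow_nonneg ht0.le _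
    have hnorm : ‖F' x' t‖
        = t ^ (v - 1) * Real.exp (-t ^ 2 / 2 - a * t * (x' - mu)) * (a * t) := by
      rw [Real.norm_eq_abs, abs_mul, abs_neg, abs_of_nonneg (by positivity : (0:ℝ) ≤ a * t),
        abs_of_nonneg (mul_nonneg h1 (Real.exp_pos _).le)]
    rw [hnorm, hbound_def]
    have he : Real.exp (-t ^ 2 / 2 - a * t * (x' - mu))
        ≤ Real.exp (-t ^ 2 / 2 - a * (x - 1 - mu) * t) := by
      rw [Real.exp_le_exp]
      nlinarith [mul_pos ha ht0]
    have htv : t ^ (v + 1 - 1) = t ^ (v - 1) * t := by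
      rw [show v + 1 - 1 = (v - 1) + 1 by ring, Real.rpow_add_one ht0.ne']
    calc t ^ (v - 1) * Real.exp (-t ^ 2 / 2 - a * t * (x' - mu)) * (a * t)
        ≤ t ^ (v - 1) * Real.exp (-t ^ 2 / 2 - a * (x - 1 - mu) * t) * (a * t) := by
          apply mul_le_mul_of_nonneg_right (mul_le_mul_of_nonneg_left he h1) (by positivity)
      _ = a * (t ^ (v + 1 - 1) * Real.exp (-t ^ 2 / 2 - a * (x - 1 - mu) * t)) := by
          rw [htv]; ring
  have bound_int : Integrable bound (volume.restrict (Ioi 0)) :=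
    (integrable_Jint (v + 1) (a * (x - 1 - mu)) (by linarith)).const_mul a
  have h_diff : ∀ᵐ t ∂(volume.restrict (Ioi 0)),
      ∀ x' ∈ Metric.ball x 1, HasDerivAt (fun x'' => F x'' t) (F' x' t) x' := by
    filter_upwards with t x' _
    have hg : HasDerivAt (fun x'' : ℝ => -t ^ 2 / 2 - a * t * (x'' - mu)) (-(a * t)) x' := by
      have h0 : HasDerivAt (fun x'' : ℝ => a * t * (x'' - mu)) (a * t) x' := by
        simpa using ((hasDerivAt_id x').sub_const mu).const_mul (a * t)
      simpa using h0.const_sub (-t ^ 2 / 2)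
    have := hg.exp.const_mul (t ^ (v - 1))
    refine this.congr_deriv ?_
    simp only [hF'_def]; ring
  have key := hasDerivAt_integral_of_dominated_loc_of_deriv_le (Metric.ball_mem_nhds x one_pos) hF_meas hF_int hF'_meas
    h_bound bound_int h_diff
  have h2 := key.2
  have hOU : OUphi lam th mu sig = fun x' => ∫ t in Ioi (0:ℝ), F x' t := by
    funext x'
    rw [OUphi]
  rw [hOU]
  refine h2.congr_deriv ?_
  have : ∀ t ∈ Ioi (0:ℝ), F' x t
      = -(a * (t ^ (v + 1 - 1) * Real.exp (-t ^ 2 / 2 - a * (x - mu) * t))) := by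
    intro t ht
    have ht0 : (0:ℝ) < t := ht
    have htv : t ^ (v + 1 - 1) = t ^ (v - 1) * t := by
      rw [show v + 1 - 1 = (v - 1) + 1 by ring, Real.rpow_add_one ht0.ne']
    rw [hF'_def, htv]
    ring_nf
  rw [setIntegral_congr_fun measurableSet_Ioi this, integral_neg, integral_const_mul, Jint]

/-- fix `c ∈ [0,1]` with `k(c) > 0` and let `β` be the unique real zero
of `H(·;c)` (which satisfies `β < x₀(c)`). Then `β < θμ/k(c)`. -/
theorem statement7 (lam th mu sig : ℝ)
    (hlam : 0 < lam) (hth : 0 < th) (hmu : 0 < mu) (hsig : 0 < sig)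
    (Phi : ℝ → ℝ) (hPhiC2 : ContDiff ℝ 2 Phi)
    (hPhiconv : StrictConvexOn ℝ Set.univ Phi)
    (hPhi' : ∀ c ∈ Set.Icc (0:ℝ) 1, deriv Phi c < 0) (hPhi1 : Phi 1 = 0)
    (c : ℝ) (hc : c ∈ Set.Icc (0:ℝ) 1) (hk : 0 < kfun lam th Phi c)
    (beta : ℝ)
    (hbeta0 : Hfun lam th mu sig Phi beta c = 0)
    (hbetau : ∀ y : ℝ, Hfun lam th mu sig Phi y c = 0 → y = beta)
    (hbetax0 : beta < x0fun lam th mu Phi c) :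
    beta < th * mu / kfun lam th Phi c := by
  have hp : deriv Phi c < 0 := hPhi' c hc
  have hlt : 0 < lam + th := by linarith
  have hkeq : kfun lam th Phi c = lam + th + lam * deriv Phi c := rfl
  by_cases hcase : -1 ≤ deriv Phi c
  · have h1 : x0fun lam th mu Phi c ≤ th * mu / kfun lam th Phi c := by
      rw [x0fun, div_le_div_iff₀ hk hk]
      nlinarith [mul_nonneg (mul_nonneg (mul_pos hth hmu).le hk.le)
        (by linarith : (0:ℝ) ≤ 1 + deriv Phi c)]
    linarith
  · push_neg at hcase
    have hkth : kfun lam th Phi c < th := by nlinarith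
    by_contra hge
    push_neg at hge
    have hbk : th * mu ≤ kfun lam th Phi c * beta := by
      rw [div_le_iff₀ hk] at hge; linarith
    have hβμ : mu < beta := by
      have h2 : mu < th * mu / kfun lam th Phi c := by
        rw [lt_div_iff₀ hk]; nlinarith
      linarith
    set a : ℝ := Real.sqrt (2 * th) / sig with ha_def
    set v : ℝ := lam / th with hv_def
    have ha : 0 < a := div_pos (Real.sqrt_pos.2 (by linarith)) hsig
    have hv : 0 < v := div_pos hlam hth
    set b : ℝ := a * (beta - mu) with hb_def
    have hbpos : 0 < b := mul_pos ha (by linarith)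
    have hI0 := Jint_pos v b hv
    have hI2 := Jint_pos (v + 2) b (by linarith)
    have hid := Jint_identity v b hv
    have htv : th * v = lam := by
      rw [hv_def]; field_simp
    have hphi : OUphi lam th mu sig beta = Jint v b := OUphi_eq lam th mu sig beta
    have hphi' : deriv (OUphi lam th mu sig) beta = -(a * Jint (v + 1) b) :=
      (hasDerivAt_OUphi lam th mu sig hlam hth hsig beta).deriv
    have hH := hbeta0
    rw [Hfun, hphi, hphi'] at hH
    have hH2 : kfun lam th Phi c * Jint v b
        + (lam + th) * Gfun lam th mu Phi beta c * (a * Jint (v + 1) b) = 0 := by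
      field_simp at hH
      linarith
    have hGnum : lam * (lam + th) * Gfun lam th mu Phi beta c
        = (lam + th) * mu * (kfun lam th Phi c - th)
          + lam * kfun lam th Phi c * (beta - mu) := by
      rw [Gfun]; field_simp
    have hx0 : beta * kfun lam th Phi c < -(th * mu * deriv Phi c) := by
      have h3 := hbetax0
      rwa [x0fun, lt_div_iff₀ hk] at h3
    have hGneg : Gfun lam th mu Phi beta c < 0 := by
      have h6 := mul_lt_mul_of_pos_left hx0 hlam
      have hGnum' := hGnum
      rw [hkeq] at hGnum' h6
      have h5 : lam * (lam + th) * Gfun lam th mu Phi beta c < 0 := by linarith only [hGnum', h6]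
      by_contra hcontra
      push_neg at hcontra
      linarith only [h5, mul_nonneg (mul_pos hlam hlt).le hcontra]
    have hbI1 : b * Jint (v + 1) b = v * Jint v b - Jint (v + 2) b := by linarith
    have hfinal : (lam + th) * (kfun lam th Phi c * beta - th * mu) * Jint v b
        - th * (lam + th) * Gfun lam th mu Phi beta c * Jint (v + 2) b = 0 := by
      linear_combination (th * (beta - mu)) * hH2
        - (th * (lam + th) * Gfun lam th mu Phi beta c) * hbI1
        - ((lam + th) * Gfun lam th mu Phi beta c * Jint v b) * htv
        - (Jint v b) * hGnum
        + (th * (lam + th) * Gfun lam th mu Phi beta c * Jint (v + 1) b) * hb_def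
    have hA : 0 ≤ (lam + th) * (kfun lam th Phi c * beta - th * mu) * Jint v b :=
      mul_nonneg (mul_nonneg hlt.le (by linarith)) hI0.le
    have hB : 0 < th * (lam + th) * -Gfun lam th mu Phi beta c * Jint (v + 2) b :=
      mul_pos (mul_pos (mul_pos hth hlt) (neg_pos.2 hGneg)) hI2
    linarith only [hfinal, hA, hB]
end
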